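/- arXiv:0709.4275 — 5 statements merged into one kernel-verified Lean document; each statement's English description precedes it below -/
import Mathlib

section
/- Let n ≥ 2 and let P(z) = a_1 z + a_2 z² + ⋯ + a_n z^n be a complex polynomial with a_n ≠ 0. If P′(z) ≠ 0 for every z ∈ ℂ with |z| ≤ 1 (i.e. P is locally univalent in the closed unit disk), then Res(P′, P′^*) ≠ 0, where P′^* is the mirror conjugate of P′ with respect to n−1; in particular, the Jacobian of the complex moment map does not vanish at P. -/
open Polynomial ComplexConjugate

/-- Mirror conjugate of a polynomial `Q` with respect to `m ≥ deg Q`. -/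
noncomputable def mirrorConj (m : ℕ) (Q : Polynomial ℂ) : Polynomial ℂ :=
  (Q.map (starRingEnd ℂ)).reflect m

/-- The Sylvester matrix of `A` (regarded as having degree `m`) and `B` (regarded as
having degree `k`): the first `k` rows contain the shifted coefficients of `A`, the
last `m` rows the shifted coefficients of `B`. -/
noncomputable def sylvester {R : Type*} [CommRing R] (m k : ℕ) (A B : Polynomial R) :
    Matrix (Fin (k + m)) (Fin (k + m)) R :=
  Matrix.of fun i j =>
    if (i : ℕ) < k then
      (if (i : ℕ) ≤ (j : ℕ) ∧ (j : ℕ) ≤ (i : ℕ) + m then A.coeff ((i : ℕ) + m - (j : ℕ)) else 0)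
    else
      (if (i : ℕ) - k ≤ (j : ℕ) ∧ (j : ℕ) ≤ (i : ℕ) then B.coeff ((i : ℕ) - (j : ℕ))
       else 0)

/-- The resultant of `A` and `B` (of respective degrees `m` and `k`), as the determinant
of their Sylvester matrix. -/
noncomputable def resultant {R : Type*} [CommRing R] (m k : ℕ) (A B : Polynomial R) : R :=
  (sylvester m k A B).det

private lemma coeff_C_mul_X_pow_mul_aux {F : Type*} [CommRing F] (c : F) (e : ℕ)
    (A : Polynomial F) (d : ℕ) :
    (C c * X ^ e * A).coeff d = if e ≤ d then c * A.coeff (d - e) else 0 := by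
  rw [mul_right_comm, coeff_mul_X_pow']
  split_ifs with h
  · rw [coeff_C_mul]
  · rfl

/-- If `A` has exact degree `m`, `B` has degree at most `k`, and `A`, `B` are coprime,
then the Sylvester determinant is nonzero. -/
private theorem sylvester_det_ne_zero_aux {F : Type*} [Field F] {m k : ℕ} (hm : 1 ≤ m)
    (hk : 1 ≤ k) {A B : Polynomial F} (hA : A.natDegree = m) (hB : B.natDegree ≤ k)
    (hcop : IsCoprime A B) : (sylvester m k A B).det ≠ 0 := by
  intro hdet
  obtain ⟨v, hv0, hv⟩ := Matrix.exists_vecMul_eq_zero_iff.mpr hdet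
  set U : Polynomial F :=
    ∑ i : Fin (k + m), if (i : ℕ) < k then C (v i) * X ^ (k - 1 - (i : ℕ)) else 0 with hU
  set V : Polynomial F :=
    ∑ i : Fin (k + m), if (i : ℕ) < k then 0 else C (v i) * X ^ (k + m - 1 - (i : ℕ)) with hV
  have hAne : A ≠ 0 := fun h => by simp [h] at hA; omega
  have hUdeg : U.natDegree ≤ k - 1 := by
    refine Polynomial.natDegree_sum_le_of_forall_le _ _ fun i _ => ?_
    split_ifs
    · exact (natDegree_C_mul_le _ _).trans (by simp)
    · simp
  have hVdeg : V.natDegree ≤ m - 1 := by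
    refine Polynomial.natDegree_sum_le_of_forall_le _ _ fun i _ => ?_
    split_ifs with h
    · simp
    · refine (natDegree_C_mul_le _ _).trans ?_
      simp only [natDegree_X_pow]
      omega
  have key : U * A + V * B = 0 := by
    ext d
    rcases lt_or_ge d (k + m) with hd | hd
    · have hj : k + m - 1 - d < k + m := by omega
      have hcol := congrFun hv ⟨k + m - 1 - d, hj⟩
      simp only [Matrix.vecMul, dotProduct, Pi.zero_apply] at hcol
      rw [coeff_add, coeff_zero, hU, hV, Finset.sum_mul, Finset.sum_mul,
        finset_sum_coeff, finset_sum_coeff, ← Finset.sum_add_distrib, ← hcol]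
      refine Finset.sum_congr rfl fun i _ => ?_
      simp only [_root_.sylvester, Matrix.of_apply, Fin.val_mk]
      rcases lt_or_ge (i : ℕ) k with hik | hik
      · simp only [if_pos hik]
        rw [zero_mul, coeff_zero, add_zero, coeff_C_mul_X_pow_mul_aux]
        split_ifs with h1 h2 h2
        · rw [show (i : ℕ) + m - (k + m - 1 - d) = d - (k - 1 - (i : ℕ)) from by omega]
        · rw [coeff_eq_zero_of_natDegree_lt (by omega : A.natDegree < d - (k - 1 - (i : ℕ))),
            mul_zero]
        · exfalso; omega
        · rw [mul_zero]
      · simp only [if_neg (not_lt.mpr hik)]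
        rw [zero_mul, coeff_zero, zero_add, coeff_C_mul_X_pow_mul_aux]
        split_ifs with h1 h2 h2
        · rw [show (i : ℕ) - (k + m - 1 - d) = d - (k + m - 1 - (i : ℕ)) from by omega]
        · rw [coeff_eq_zero_of_natDegree_lt
            (by omega : B.natDegree < d - (k + m - 1 - (i : ℕ))), mul_zero]
        · exfalso; omega
        · rw [mul_zero]
    · have hlt : (U * A + V * B).natDegree < k + m := by
        have h0 := natDegree_add_le (U * A) (V * B)
        have h1 := natDegree_mul_le (p := U) (q := A)
        have h2 := natDegree_mul_le (p := V) (q := B)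
        simp only [le_max_iff] at h0
        omega
      exact coeff_eq_zero_of_natDegree_lt (by omega)
  have hAV : A ∣ V * B := ⟨-U, by linear_combination key⟩
  have hV0 : V = 0 := by
    by_contra hVne
    have := Polynomial.natDegree_le_of_dvd (hcop.dvd_of_dvd_mul_right hAV) hVne
    omega
  have hU0 : U = 0 := by
    have : U * A = 0 := by rw [hV0] at key; simpa using key
    rcases mul_eq_zero.mp this with h | h
    · exact h
    · exact absurd h hAne
  apply hv0
  funext i
  rcases lt_or_ge (i : ℕ) k with hik | hik
  · have : U.coeff (k - 1 - (i : ℕ)) = v i := by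
      rw [hU, finset_sum_coeff]
      rw [Finset.sum_eq_single i]
      · rw [if_pos hik, coeff_C_mul, coeff_X_pow, if_pos rfl, mul_one]
      · intro b _ hbi
        split_ifs with hb
        · rw [coeff_C_mul, coeff_X_pow, if_neg (fun h => hbi (Fin.ext (by omega))), mul_zero]
        · simp
      · intro h
        exact absurd (Finset.mem_univ i) h
    rw [hU0] at this
    simpa using this.symm
  · have : V.coeff (k + m - 1 - (i : ℕ)) = v i := by
      rw [hV, finset_sum_coeff]
      rw [Finset.sum_eq_single i]
      · rw [if_neg (not_lt.mpr hik), coeff_C_mul, coeff_X_pow, if_pos rfl, mul_one]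
      · intro b _ hbi
        split_ifs with hb
        · simp
        · rw [coeff_C_mul, coeff_X_pow,
            if_neg (fun h => hbi (Fin.ext (by omega))), mul_zero]
      · intro h
        exact absurd (Finset.mem_univ i) h
    rw [hV0] at this
    simpa using this.symm

/-- if `P(z) = a₁z + ⋯ + aₙzⁿ` (`n ≥ 2`, `aₙ ≠ 0`) satisfies `P'(z) ≠ 0`
for every `z` in the closed unit disk (local univalence), then `Res(P', P'^*) ≠ 0`;
in particular the Jacobian of the complex moment map does not vanish at `P`. -/
theorem resultant_ne_zero_of_locally_univalent (n : ℕ) (hn : 2 ≤ n) (a : ℕ → ℂ)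
    (hna : a n ≠ 0)
    (P : Polynomial ℂ)
    (hP : P = ∑ s ∈ Finset.Icc 1 n, Polynomial.C (a s) * Polynomial.X ^ s)
    (hloc : ∀ z : ℂ, ‖z‖ ≤ 1 → P.derivative.eval z ≠ 0) :
    resultant (n - 1) (n - 1) P.derivative (mirrorConj (n - 1) P.derivative) ≠ 0 := by
  set A := P.derivative with hA
  set B := mirrorConj (n - 1) A with hB
  have hPco : ∀ j, P.coeff j = if j ∈ Finset.Icc 1 n then a j else 0 := by
    intro j
    rw [hP, finset_sum_coeff]
    simp only [coeff_C_mul, coeff_X_pow, mul_ite, mul_one, mul_zero]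
    rw [Finset.sum_ite_eq (Finset.Icc 1 n) j a]
  have hPdeg : P.natDegree ≤ n := by
    rw [hP]
    refine Polynomial.natDegree_sum_le_of_forall_le _ _ fun s hs => ?_
    refine (natDegree_C_mul_le _ _).trans ?_
    simp only [natDegree_X_pow]
    exact (Finset.mem_Icc.mp hs).2
  have hAdegle : A.natDegree ≤ n - 1 := (natDegree_derivative_le P).trans (by omega)
  have hAco : A.coeff (n - 1) = n * a n := by
    rw [hA, coeff_derivative, show n - 1 + 1 = n from by omega, hPco,
      if_pos (Finset.mem_Icc.mpr ⟨by omega, le_refl n⟩)]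
    push_cast [Nat.cast_sub (by omega : 1 ≤ n)]
    ring
  have hAcone : A.coeff (n - 1) ≠ 0 := by
    rw [hAco]
    exact mul_ne_zero (Nat.cast_ne_zero.mpr (by omega)) hna
  have hAdeg : A.natDegree = n - 1 :=
    le_antisymm hAdegle (le_natDegree_of_ne_zero hAcone)
  have hAne : A ≠ 0 := fun h => hAcone (by simp [h])
  have rootA : ∀ z : ℂ, A.IsRoot z → 1 < ‖z‖ := fun z hz => by
    by_contra h
    exact hloc z (le_of_not_gt h) hz
  have hQdeg : (A.map (starRingEnd ℂ)).natDegree ≤ n - 1 :=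
    natDegree_map_le.trans hAdegle
  have hBdeg : B.natDegree ≤ n - 1 := by
    rw [hB, mirrorConj]
    refine natDegree_le_iff_coeff_eq_zero.mpr fun N hN => ?_
    rw [coeff_reflect, revAt_eq_self_of_lt hN, coeff_map,
      coeff_eq_zero_of_natDegree_lt (lt_of_le_of_lt hAdegle hN), map_zero]
  have hBco : B.coeff 0 = conj (A.coeff (n - 1)) := by
    rw [hB, mirrorConj, coeff_reflect, revAt_le (Nat.zero_le _), Nat.sub_zero, coeff_map]
  have rootB : ∀ z : ℂ, B.IsRoot z → ‖z‖ < 1 := by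
    intro z hz
    have hz0 : z ≠ 0 := by
      intro h
      rw [IsRoot, h, ← coeff_zero_eq_eval_zero, hBco] at hz
      exact hAcone (by simpa using hz)
    letI : Invertible (z⁻¹ : ℂ) := invertibleOfNonzero (inv_ne_zero hz0)
    have h1 : eval₂ (RingHom.id ℂ) (⅟ (z⁻¹ : ℂ)) ((A.map (starRingEnd ℂ)).reflect (n-1)) = 0 := by
      rw [invOf_eq_inv, inv_inv]
      have : eval₂ (RingHom.id ℂ) z ((A.map (starRingEnd ℂ)).reflect (n-1)) =
          eval z ((A.map (starRingEnd ℂ)).reflect (n-1)) := rfl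
      rw [this]
      exact hz
    have h2 : eval₂ (RingHom.id ℂ) (z⁻¹ : ℂ) (A.map (starRingEnd ℂ)) = 0 :=
      (eval₂_reflect_eq_zero_iff (RingHom.id ℂ) (z⁻¹ : ℂ) (n-1) _ hQdeg).mp h1
    have h3 : (A.map (starRingEnd ℂ)).eval (z⁻¹ : ℂ) = 0 := h2
    have h4 : A.eval (conj (z⁻¹ : ℂ)) = 0 := by
      have h5 : eval₂ (starRingEnd ℂ) ((starRingEnd ℂ) (conj z⁻¹)) A =
          (starRingEnd ℂ) (A.eval (conj z⁻¹)) := eval₂_hom _ _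
      rw [Complex.conj_conj] at h5
      rw [← eval_map, h3] at h5
      exact star_injective (by simpa using h5.symm)
    have := rootA _ h4
    rw [Complex.norm_conj, norm_inv] at this
    exact (one_lt_inv_iff₀.mp this).2
  have hcop : IsCoprime A B := by
    refine EuclideanDomain.isCoprime_of_dvd (fun h => hAne h.1) ?_
    intro d hdnu hdne hdA hdB
    obtain ⟨z, hzroot⟩ := Complex.exists_root (degree_pos_of_ne_zero_of_nonunit hdne hdnu)
    have h1 := rootA z (hzroot.dvd hdA)
    have h2 := rootB z (hzroot.dvd hdB)
    linarith
  exact sylvester_det_ne_zero_aux (by omega) (by omega) hAdeg hBdeg hcop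
end

section
/- (Richardson's formula) For every integer k ≥ 0, μ_k(P) = Σ s_1 · a_{s_1} a_{s_2} ⋯ a_{s_{k+1}} · conj(a_{s_1+s_2+⋯+s_{k+1}}), where the sum is taken over all (k+1)-tuples (s_1, …, s_{k+1}) of indices in {1, …, n}, with the convention a_j := 0 for j > n. -/
open Polynomial ComplexConjugate

/-- The `k`-th complex moment of `P`. -/
noncomputable def moment (n : ℕ) (P : Polynomial ℂ) (k : ℕ) : ℂ :=
  (P.derivative * P ^ k * mirrorConj n P).coeff (n - 1)

/-- Richardson's formula: for every `k ≥ 0`,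
`μ_k(P) = Σ s₁ ⬝ a_{s₁} ⋯ a_{s_{k+1}} ⬝ conj (a_{s₁+⋯+s_{k+1}})`,
the sum being over all `(k+1)`-tuples of indices in `{1, …, n}`,
with the convention `a_j = 0` for `j > n`. -/
theorem richardson_formula (n : ℕ) (hn : 1 ≤ n) (a : ℕ → ℂ)
    (ha : ∀ j, n < j → a j = 0)
    (P : Polynomial ℂ) (hP : P = ∑ s ∈ Finset.Icc 1 n, Polynomial.C (a s) * Polynomial.X ^ s)
    (k : ℕ) :
    moment n P k =
      ∑ s ∈ Fintype.piFinset (fun _ : Fin (k + 1) => Finset.Icc 1 n),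
        ((s 0 : ℕ) : ℂ) * (∏ i, a (s i)) * conj (a (∑ i, s i)) := by
  classical
  have hn1 : n - 1 + 1 = n := Nat.succ_pred_eq_of_pos hn
  -- Step 1: `X * P'` as an explicit sum
  have hXD : X * P.derivative = ∑ s ∈ Finset.Icc 1 n, C ((s : ℂ) * a s) * X ^ s := by
    rw [hP, derivative_sum, Finset.mul_sum]
    refine Finset.sum_congr rfl fun s hs => ?_
    obtain ⟨hs1, -⟩ := Finset.mem_Icc.mp hs
    have h1 : s - 1 + 1 = s := Nat.succ_pred_eq_of_pos hs1
    rw [derivative_C_mul_X_pow]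
    calc X * (C (a s * (s : ℕ)) * X ^ (s - 1))
        = C (a s * (s : ℕ)) * (X ^ (s - 1) * X) := by ring
      _ = C ((s : ℂ) * a s) * X ^ s := by
          rw [← pow_succ, h1, mul_comm (a s)]
  -- Step 2: the mirror conjugate as an explicit sum
  have hrefl : ∀ (f : ℕ → Polynomial ℂ) (S : Finset ℕ),
      (∑ s ∈ S, f s).reflect n = ∑ s ∈ S, (f s).reflect n := by
    intro f S
    induction S using Finset.induction with
    | empty => simp
    | insert _ _ h ih => rw [Finset.sum_insert h, Finset.sum_insert h, reflect_add, ih]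
  have hPstar : mirrorConj n P = ∑ t ∈ Finset.Icc 1 n, C (conj (a t)) * X ^ (n - t) := by
    rw [mirrorConj, hP, Polynomial.map_sum, hrefl]
    refine Finset.sum_congr rfl fun t ht => ?_
    obtain ⟨-, ht2⟩ := Finset.mem_Icc.mp ht
    rw [Polynomial.map_mul, map_C, Polynomial.map_pow, map_X, reflect_C_mul_X_pow,
      revAt_le ht2]
  -- Step 3: `X * P' * P^k` as a sum over tuples
  have hDPk : X * P.derivative * P ^ k
      = ∑ s ∈ Fintype.piFinset (fun _ : Fin (k + 1) => Finset.Icc 1 n),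
          C (((s 0 : ℕ) : ℂ) * ∏ i, a (s i)) * X ^ (∑ i, s i) := by
    have hprod : X * P.derivative * P ^ k = ∏ i : Fin (k + 1),
        ∑ s ∈ Finset.Icc 1 n, C (if i = 0 then (s : ℂ) * a s else a s) * X ^ s := by
      rw [Fin.prod_univ_succ]
      have h0 : ∑ s ∈ Finset.Icc 1 n, C (if (0 : Fin (k+1)) = 0 then (s : ℂ) * a s else a s)
          * X ^ s = X * P.derivative := by
        rw [hXD]; simp
      have hsucc : ∀ i : Fin k, (∑ s ∈ Finset.Icc 1 n,
          C (if i.succ = 0 then (s : ℂ) * a s else a s) * X ^ s) = P := by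
        intro i
        rw [hP]
        exact Finset.sum_congr rfl fun s _ => by rw [if_neg (Fin.succ_ne_zero i)]
      rw [h0]
      congr 1
      refine Eq.symm ?_
      calc ∏ i : Fin k, (∑ s ∈ Finset.Icc 1 n,
              C (if i.succ = 0 then (s : ℂ) * a s else a s) * X ^ s)
          = ∏ _i : Fin k, P := Finset.prod_congr rfl fun i _ => hsucc i
        _ = P ^ k := by rw [Finset.prod_const, Finset.card_univ, Fintype.card_fin]
    rw [hprod, Finset.prod_univ_sum]
    refine Finset.sum_congr rfl fun s hs => ?_
    rw [Finset.prod_mul_distrib, ← map_prod, Finset.prod_pow_eq_pow_sum]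
    congr 2
    rw [Fin.prod_univ_succ, Fin.prod_univ_succ (f := fun i => a (s i))]
    simp only [if_neg (Fin.succ_ne_zero _), if_true, ite_true, eq_self_iff_true]
    ring
  -- Step 4: the full product
  have key : X * (P.derivative * P ^ k * mirrorConj n P)
      = ∑ s ∈ Fintype.piFinset (fun _ : Fin (k + 1) => Finset.Icc 1 n),
          ∑ t ∈ Finset.Icc 1 n,
            C ((((s 0 : ℕ) : ℂ) * ∏ i, a (s i)) * conj (a t)) * X ^ (∑ i, s i + (n - t)) := by
    have : X * (P.derivative * P ^ k * mirrorConj n P)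
        = (X * P.derivative * P ^ k) * mirrorConj n P := by ring
    rw [this, hDPk, hPstar, Finset.sum_mul_sum]
    refine Finset.sum_congr rfl fun s _ => Finset.sum_congr rfl fun t _ => ?_
    rw [mul_mul_mul_comm, ← C_mul, ← pow_add]
  -- Step 5: take the coefficient
  have hco : moment n P k = (X * (P.derivative * P ^ k * mirrorConj n P)).coeff n := by
    have hx := coeff_X_mul (P.derivative * P ^ k * mirrorConj n P) (n - 1)
    rw [moment, ← hx, hn1]
  rw [hco, key, finset_sum_coeff]
  refine Finset.sum_congr rfl fun s hs => ?_
  have hsmem : ∀ i, s i ∈ Finset.Icc 1 n := fun i => (Fintype.mem_piFinset.mp hs) i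
  have hs0 : 1 ≤ s 0 := (Finset.mem_Icc.mp (hsmem 0)).1
  have hsum1 : 1 ≤ ∑ i, s i :=
    le_trans hs0 (Finset.single_le_sum (fun i _ => Nat.zero_le (s i)) (Finset.mem_univ 0))
  rw [finset_sum_coeff]
  simp only [coeff_C_mul_X_pow]
  by_cases h : ∑ i, s i ≤ n
  · rw [Finset.sum_eq_single (∑ i, s i)]
    · rw [if_pos (by omega)]
    · intro t ht hne
      obtain ⟨ht1, ht2⟩ := Finset.mem_Icc.mp ht
      rw [if_neg (by omega)]
    · intro hmem
      exact absurd (Finset.mem_Icc.mpr ⟨hsum1, h⟩) hmem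
  · rw [ha _ (lt_of_not_ge h), map_zero, mul_zero]
    exact Finset.sum_eq_zero fun t ht => by rw [if_neg (by omega)]
end

section
/- For every integer k ≥ 0, (k+1)·μ_k(P) equals the coefficient of z^n in the polynomial P(z)^{k+1}·P′^*(z), where P′^* is the mirror conjugate of the derivative P′ with respect to n−1. -/
open Polynomial ComplexConjugate

lemma key_lemma (n : ℕ) (hn : 1 ≤ n) (Q S : Polynomial ℂ) (hQ : Q.coeff 0 = 0) :
    (Polynomial.derivative Q * Polynomial.reflect n S).coeff (n - 1) =
      (Q * Polynomial.reflect (n - 1) (Polynomial.derivative S)).coeff n := by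
  rw [Polynomial.coeff_mul, Polynomial.coeff_mul,
    Finset.Nat.sum_antidiagonal_eq_sum_range_succ_mk,
    Finset.Nat.sum_antidiagonal_eq_sum_range_succ_mk]
  have h1 : n - 1 + 1 = n := Nat.sub_add_cancel hn
  simp only [Nat.succ_eq_add_one, h1]
  rw [Finset.sum_range_succ']
  simp only [hQ, zero_mul, add_zero]
  apply Finset.sum_congr rfl
  intro i hi
  have hi' : i < n := Finset.mem_range.mp hi
  rw [Polynomial.coeff_derivative, Polynomial.coeff_reflect, Polynomial.coeff_reflect,
    Polynomial.revAt_le (by omega : n - 1 - i ≤ n),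
    Polynomial.revAt_le (by omega : n - (i + 1) ≤ n - 1)]
  have e1 : n - (n - 1 - i) = i + 1 := by omega
  have e2 : n - 1 - (n - (i + 1)) = i := by omega
  rw [e1, e2, Polynomial.coeff_derivative]
  ring

/-- for every `k ≥ 0`, `(k+1)·μ_k(P)` equals the coefficient of `z^n`
in `P^{k+1} ⬝ P'^*`, where `P'^*` is the mirror conjugate of `P'` w.r.t. `n-1`. -/
theorem moment_eq_coeff_pow_succ (n : ℕ) (hn : 1 ≤ n) (a : ℕ → ℂ)
    (P : Polynomial ℂ) (hP : P = ∑ s ∈ Finset.Icc 1 n, Polynomial.C (a s) * Polynomial.X ^ s)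
    (k : ℕ) :
    ((k : ℂ) + 1) * moment n P k =
      (P ^ (k + 1) * mirrorConj (n - 1) P.derivative).coeff n := by
  have hP0 : P.coeff 0 = 0 := by
    rw [hP]
    rw [Polynomial.finset_sum_coeff]
    apply Finset.sum_eq_zero
    intro s hs
    have hs1 : 1 ≤ s := (Finset.mem_Icc.mp hs).1
    rw [Polynomial.coeff_C_mul, Polynomial.coeff_X_pow]
    simp [Nat.ne_of_lt hs1]
  have hQ0 : (P ^ (k + 1)).coeff 0 = 0 := by
    rw [Polynomial.coeff_zero_eq_eval_zero] at hP0 ⊢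
    simp [hP0]
  have hder : mirrorConj (n - 1) P.derivative =
      Polynomial.reflect (n - 1) (Polynomial.derivative (P.map (starRingEnd ℂ))) := by
    rw [mirrorConj, Polynomial.derivative_map]
  rw [hder, ← key_lemma n hn (P ^ (k + 1)) (P.map (starRingEnd ℂ)) hQ0]
  rw [moment, mirrorConj]
  rw [Polynomial.derivative_pow]
  simp only [Nat.add_sub_cancel, Nat.cast_add, Nat.cast_one]
  rw [show Polynomial.C ((k:ℂ)+1) * P ^ k * Polynomial.derivative P *
      Polynomial.reflect n (P.map (starRingEnd ℂ)) =
      Polynomial.C ((k:ℂ)+1) * (Polynomial.derivative P * P ^ k *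
      Polynomial.reflect n (P.map (starRingEnd ℂ))) from by ring, Polynomial.coeff_C_mul,
    mul_assoc]
end

section
/- For every integer k ≥ 0 and every j with 1 ≤ j ≤ n, the partial derivative of the formal moment satisfies ∂M_k/∂a_j = the coefficient of z^{n−j} in Q^*(z)·P(z)^k, as an identity in the polynomial ring ℂ[a_1,…,a_n,b_1,…,b_n]. -/
open Polynomial MvPolynomial

/-- `P(z) = Σ_{s=1}^n a_s z^s` with formal coefficients `a_s = X (Sum.inl s)` in
`ℂ[a₁,…,aₙ,b₁,…,bₙ]`. -/
noncomputable def Pform (n : ℕ) : Polynomial (MvPolynomial (ℕ ⊕ ℕ) ℂ) :=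
  ∑ s ∈ Finset.Icc 1 n, Polynomial.C (MvPolynomial.X (Sum.inl s)) * Polynomial.X ^ s

/-- `P^*(z) = Σ_{j=0}^{n-1} b_{n-j} z^j`, the formal mirror conjugate of `P` w.r.t. `n`,
with `b_s = X (Sum.inr s)` playing the role of the conjugate of `a_s`. -/
noncomputable def PstarForm (n : ℕ) : Polynomial (MvPolynomial (ℕ ⊕ ℕ) ℂ) :=
  ∑ s ∈ Finset.Icc 1 n, Polynomial.C (MvPolynomial.X (Sum.inr s)) * Polynomial.X ^ (n - s)

/-- `Q^*(z) = Σ_{j=0}^{n-1} (n-j) b_{n-j} z^j`, the formal mirror conjugate of `P'`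
w.r.t. `n-1`. -/
noncomputable def QstarForm (n : ℕ) : Polynomial (MvPolynomial (ℕ ⊕ ℕ) ℂ) :=
  ∑ s ∈ Finset.Icc 1 n,
    Polynomial.C ((s : MvPolynomial (ℕ ⊕ ℕ) ℂ) * MvPolynomial.X (Sum.inr s)) *
      Polynomial.X ^ (n - s)

/-- The formal `k`-th moment `M_k ∈ ℂ[a₁,…,aₙ,b₁,…,bₙ]`: the coefficient of
`z^{n-1}` in `P'(z)·P(z)^k·P^*(z)`. -/
noncomputable def Mform (n k : ℕ) : MvPolynomial (ℕ ⊕ ℕ) ℂ :=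
  ((Pform n).derivative * Pform n ^ k * PstarForm n).coeff (n - 1)

abbrev RR := MvPolynomial (ℕ ⊕ ℕ) ℂ

/-- coefficient-wise partial derivative on `RR[X]` -/
noncomputable def Dc (j : ℕ) : Derivation ℂ (Polynomial RR) (Polynomial RR) :=
  PolynomialModule.equivPolynomialSelf.compDer
    ((MvPolynomial.pderiv (R := ℂ) (Sum.inl j)).mapCoeffs)

lemma coeff_Dc (j : ℕ) (f : Polynomial RR) (i : ℕ) :
    (Dc j f).coeff i = MvPolynomial.pderiv (Sum.inl j) (f.coeff i) := rfl

lemma Dc_derivative (j : ℕ) (f : Polynomial RR) :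
    Dc j (Polynomial.derivative f) = Polynomial.derivative (Dc j f) := by
  ext i
  simp [coeff_Dc, Polynomial.coeff_derivative, Derivation.leibniz, mul_comm]

lemma Dc_C (j : ℕ) (a : RR) :
    Dc j (Polynomial.C a) = Polynomial.C (MvPolynomial.pderiv (Sum.inl j) a) := by
  ext i
  simp [coeff_Dc, Polynomial.coeff_C, apply_ite (MvPolynomial.pderiv (Sum.inl j))]

lemma Dc_X (j : ℕ) : Dc j (Polynomial.X : Polynomial RR) = 0 := by
  ext i
  simp [coeff_Dc, Polynomial.coeff_X, apply_ite (MvPolynomial.pderiv (Sum.inl j))]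

lemma Dc_Xpow (j s : ℕ) : Dc j ((Polynomial.X : Polynomial RR) ^ s) = 0 := by
  rw [Derivation.leibniz_pow, Dc_X]
  simp

lemma Dc_Pform (n j : ℕ) (hj1 : 1 ≤ j) (hjn : j ≤ n) :
    Dc j (Pform n) = Polynomial.X ^ j := by
  unfold Pform
  rw [map_sum]
  rw [Finset.sum_eq_single_of_mem j (by simp [Finset.mem_Icc, hj1, hjn])]
  · rw [Derivation.leibniz, Dc_Xpow, Dc_C, MvPolynomial.pderiv_X_self]
    simp
  · intro s _ hs
    rw [Derivation.leibniz, Dc_Xpow, Dc_C, MvPolynomial.pderiv_X_of_ne (by simp [hs])]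
    simp

lemma Dc_Pstar (n j : ℕ) : Dc j (PstarForm n) = 0 := by
  unfold PstarForm
  rw [map_sum]
  refine Finset.sum_eq_zero fun s _ => ?_
  rw [Derivation.leibniz, Dc_Xpow, Dc_C, MvPolynomial.pderiv_X_of_ne (by simp)]
  simp

lemma Qstar_eq (n : ℕ) :
    QstarForm n = n • PstarForm n - Polynomial.X * Polynomial.derivative (PstarForm n) := by
  unfold QstarForm PstarForm
  rw [derivative_sum, Finset.smul_sum, Finset.mul_sum, ← Finset.sum_sub_distrib]
  refine Finset.sum_congr rfl fun s hs => ?_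
  rw [Polynomial.derivative_C_mul_X_pow]
  rcases Nat.lt_or_ge s n with h | h
  · have hX : (Polynomial.X : Polynomial RR) * (Polynomial.C (MvPolynomial.X (Sum.inr s) * ((n - s : ℕ) : RR)) * Polynomial.X ^ (n - s - 1)) = Polynomial.C (MvPolynomial.X (Sum.inr s) * ((n - s : ℕ) : RR)) * Polynomial.X ^ (n - s) := by
      rw [mul_left_comm, ← pow_succ']
      congr 2
      omega
    rw [hX, nsmul_eq_mul, ← map_natCast (Polynomial.C (R := RR)), ← mul_assoc, ← Polynomial.C_mul, ← sub_mul, ← Polynomial.C_sub]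
    congr 1
    rw [Nat.cast_sub (le_of_lt h)]
    ring_nf
  · have hsn : s = n := le_antisymm (by simp only [Finset.mem_Icc] at hs; exact hs.2) h
    subst hsn
    simp only [Nat.sub_self, Nat.cast_zero, mul_zero, Polynomial.C_0, zero_mul, mul_zero, sub_zero, pow_zero, mul_one]
    rw [nsmul_eq_mul, ← map_natCast (Polynomial.C (R := RR)), ← Polynomial.C_mul, mul_comm]

/-- for every `k ≥ 0` and `1 ≤ j ≤ n`,
`∂M_k/∂a_j` equals the coefficient of `z^{n-j}` in `Q^*(z)·P(z)^k`. -/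
theorem pderiv_a_Mform (n k j : ℕ) (hn : 1 ≤ n) (hj1 : 1 ≤ j) (hjn : j ≤ n) :
    MvPolynomial.pderiv (Sum.inl j) (Mform n k) =
      (QstarForm n * Pform n ^ k).coeff (n - j) := by
  set P := Pform n with hP
  set Ps := PstarForm n with hPs
  have hLHS : MvPolynomial.pderiv (Sum.inl j) (Mform n k)
      = (Dc j (Polynomial.derivative P * P ^ k * Ps)).coeff (n - 1) := rfl
  have hDprod : Dc j (Polynomial.derivative P * P ^ k * Ps)
      = Polynomial.C ((j : RR)) * (Polynomial.X ^ (j-1) * (P ^ k * Ps))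
        + k • (Polynomial.X ^ j * (Polynomial.derivative P * P ^ (k-1) * Ps)) := by
    rw [Derivation.leibniz, Dc_Pstar, Derivation.leibniz, Derivation.leibniz_pow,
      Dc_Pform n j hj1 hjn, Dc_derivative, Dc_Pform n j hj1 hjn,
      Polynomial.derivative_X_pow]
    simp only [smul_eq_mul, smul_zero, zero_add, mul_zero, add_zero, nsmul_eq_mul]
    ring
  have hidx : (n - j) + (j - 1) = n - 1 := by omega
  have hLHS2 : MvPolynomial.pderiv (Sum.inl j) (Mform n k)
      = (j : RR) * (P ^ k * Ps).coeff (n - j)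
        + k • (if j ≤ n - 1 then (Polynomial.derivative P * P ^ (k-1) * Ps).coeff (n - 1 - j) else 0) := by
    rw [hLHS, hDprod, Polynomial.coeff_add, Polynomial.coeff_C_mul, Polynomial.coeff_smul,
      ← hidx, Polynomial.coeff_X_pow_mul, Polynomial.coeff_X_pow_mul']
  rw [hLHS2, Qstar_eq, sub_mul, Polynomial.coeff_sub, smul_mul_assoc, Polynomial.coeff_smul,
    ← hPs, mul_comm Ps (P ^ k), mul_assoc Polynomial.X]
  by_cases hjn' : j = n
  · subst hjn'
    rw [Nat.sub_self, if_neg (by omega)]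
    simp [Polynomial.mul_coeff_zero, Polynomial.coeff_X_zero, nsmul_eq_mul]
  · have hjlt : j < n := lt_of_le_of_ne hjn hjn'
    set m := n - j with hm
    have hm1 : 1 ≤ m := by omega
    have hmm : m - 1 + 1 = m := by omega
    rw [if_pos (by omega)]
    have hxm : (Polynomial.X * (Polynomial.derivative Ps * P ^ k)).coeff m
        = (Polynomial.derivative Ps * P ^ k).coeff (m - 1) := by
      conv_lhs => rw [← hmm]
      rw [Polynomial.coeff_X_mul]
    rw [hxm]
    have hder : Polynomial.derivative (P ^ k * Ps)
        = Polynomial.C ((k : RR)) * (Polynomial.derivative P * P ^ (k-1) * Ps)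
          + Polynomial.derivative Ps * P ^ k := by
      rw [Polynomial.derivative_mul, Polynomial.derivative_pow]
      ring
    have key := congrArg (fun q => Polynomial.coeff q (m - 1)) hder
    simp only [Polynomial.coeff_add, Polynomial.coeff_C_mul] at key
    rw [Polynomial.coeff_derivative, hmm] at key
    rw [show ((m - 1 : ℕ) : RR) + 1 = ((m : ℕ) : RR) by
      rw [Nat.cast_sub hm1, Nat.cast_one, sub_add_cancel]] at key
    have hn1j : n - 1 - j = m - 1 := by omega
    rw [hn1j, nsmul_eq_mul, nsmul_eq_mul]
    have hcast : ((m : ℕ) : RR) = (n : RR) - (j : RR) := by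
      rw [hm, Nat.cast_sub hjn]
    rw [hcast] at key
    linear_combination -key
end

section
/- Let 𝔻 = {z ∈ ℂ : |z| < 1} be the open unit disk. For every integer k ≥ 0, (1/π)·∫_𝔻 P(z)^k·|P′(z)|² dA(z) = μ_k(P), where dA denotes Lebesgue area measure on ℂ. -/
open Polynomial ComplexConjugate MeasureTheory Set Metric

lemma angular_int (m : ℤ) (hm : m ≠ 0) :
    ∫ θ in Set.Ioo (-Real.pi) Real.pi, Complex.exp (((m : ℂ) * Complex.I) * (θ : ℂ)) = 0 := by
  have hc : (m : ℂ) * Complex.I ≠ 0 :=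
    mul_ne_zero (by exact_mod_cast hm) Complex.I_ne_zero
  rw [← integral_Ioc_eq_integral_Ioo,
    ← intervalIntegral.integral_of_le (by linarith [Real.pi_pos] : -Real.pi ≤ Real.pi)]
  rw [integral_exp_mul_complex hc]
  have h1 : Complex.exp ((m : ℂ) * Complex.I * (Real.pi : ℂ)) = (-1 : ℂ) ^ m := by
    rw [show (m : ℂ) * Complex.I * (Real.pi : ℂ) = (m : ℂ) * ((Real.pi : ℂ) * Complex.I) by ring,
      Complex.exp_int_mul, Complex.exp_pi_mul_I]
  have h2 : Complex.exp ((m : ℂ) * Complex.I * ((-Real.pi : ℝ) : ℂ)) = (-1 : ℂ) ^ m := by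
    rw [show (m : ℂ) * Complex.I * ((-Real.pi : ℝ) : ℂ) = (-m : ℤ) * ((Real.pi : ℂ) * Complex.I) by
      push_cast; ring, Complex.exp_int_mul, Complex.exp_pi_mul_I, zpow_neg, ← inv_zpow, inv_neg,
      inv_one]
  rw [h1, h2, sub_self, zero_div]

lemma radial_int (m : ℕ) :
    ∫ r in Set.Ioi (0 : ℝ), (if r < 1 then ((r : ℂ)) ^ m else 0) = 1 / (m + 1) := by
  have h1 : ∀ r : ℝ, (if r < 1 then ((r : ℂ)) ^ m else 0)
      = Set.indicator (Set.Iio 1) (fun r : ℝ => ((r : ℂ)) ^ m) r := by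
    intro r; rw [Set.indicator_apply]; simp [Set.mem_Iio]
  simp_rw [h1]
  rw [setIntegral_indicator measurableSet_Iio, Set.Ioi_inter_Iio]
  have h2 : ∀ r : ℝ, ((r : ℂ)) ^ m = ((r ^ m : ℝ) : ℂ) := fun r => by push_cast; ring
  simp_rw [h2]
  have hreal : ∫ x in Set.Ioo (0:ℝ) 1, x ^ m = 1 / (m + 1) := by
    rw [← integral_Ioc_eq_integral_Ioo, ← intervalIntegral.integral_of_le zero_le_one,
      integral_pow]
    norm_num
  calc ∫ x in Set.Ioo (0:ℝ) 1, ((x ^ m : ℝ) : ℂ)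
      = ((∫ x in Set.Ioo (0:ℝ) 1, x ^ m : ℝ) : ℂ) := integral_ofReal
    _ = 1 / (m + 1) := by rw [hreal]; push_cast; ring

lemma disk_int (i j : ℕ) :
    ∫ z in Metric.ball (0 : ℂ) 1, z ^ i * (starRingEnd ℂ) z ^ j =
      if i = j then (Real.pi : ℂ) / (i + 1) else 0 := by
  rw [← integral_indicator measurableSet_ball, ← Complex.integral_comp_polarCoord_symm]
  have key : ∀ p ∈ polarCoord.target,
      p.1 • Set.indicator (Metric.ball (0 : ℂ) 1)
        (fun z : ℂ => z ^ i * (starRingEnd ℂ) z ^ j) (Complex.polarCoord.symm p)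
      = (if p.1 < 1 then ((p.1 : ℂ)) ^ (i + j + 1) else 0) *
          Complex.exp ((((i : ℂ) - j) * Complex.I) * (p.2 : ℂ)) := by
    intro p hp
    rw [polarCoord_target] at hp
    obtain ⟨hp1, hp2⟩ := hp
    rw [Set.mem_Ioi] at hp1
    have hsymm : Complex.polarCoord.symm p = (p.1 : ℂ) * Complex.exp ((p.2 : ℂ) * Complex.I) := by
      rw [Complex.polarCoord_symm_apply, Complex.exp_mul_I, Complex.ofReal_cos,
        Complex.ofReal_sin]
    have hmem : Complex.polarCoord.symm p ∈ Metric.ball (0 : ℂ) 1 ↔ p.1 < 1 := by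
      rw [mem_ball_zero_iff, Complex.norm_polarCoord_symm,
        abs_of_pos hp1]
    by_cases h : p.1 < 1
    · rw [Set.indicator_of_mem (hmem.mpr h), if_pos h, hsymm]
      have hconj : (starRingEnd ℂ) ((p.1 : ℂ) * Complex.exp ((p.2 : ℂ) * Complex.I))
          = (p.1 : ℂ) * Complex.exp (-((p.2 : ℂ) * Complex.I)) := by
        rw [map_mul, Complex.conj_ofReal, ← Complex.exp_conj]
        congr 1
        simp [Complex.conj_ofReal]
      rw [hconj]
      rw [mul_pow, mul_pow, ← Complex.exp_nat_mul, ← Complex.exp_nat_mul, Complex.real_smul]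
      rw [show (p.1 : ℂ) * ((p.1:ℂ) ^ i * Complex.exp ((i:ℂ) * ((p.2:ℂ) * Complex.I)) *
          ((p.1:ℂ) ^ j * Complex.exp ((j:ℂ) * -((p.2:ℂ) * Complex.I))))
          = (p.1 : ℂ) ^ (i + j + 1) *
            (Complex.exp ((i:ℂ) * ((p.2:ℂ) * Complex.I)) *
              Complex.exp ((j:ℂ) * -((p.2:ℂ) * Complex.I))) by rw [pow_add, pow_add]; ring]
      rw [← Complex.exp_add]
      congr 1
      ring
    · rw [Set.indicator_of_notMem (fun hc => h (hmem.mp hc)), if_neg h, smul_zero, zero_mul]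
  rw [setIntegral_congr_fun polarCoord.open_target.measurableSet key]
  rw [polarCoord_target, Measure.volume_eq_prod]
  rw [show (∫ x : ℝ × ℝ in Set.Ioi (0:ℝ) ×ˢ Set.Ioo (-Real.pi) Real.pi,
      (if x.1 < 1 then ((x.1 : ℂ)) ^ (i + j + 1) else 0) *
        Complex.exp ((((i : ℂ) - j) * Complex.I) * (x.2 : ℂ))
      ∂((volume : Measure ℝ).prod volume))
      = (∫ r in Set.Ioi (0:ℝ), (if r < 1 then ((r : ℂ)) ^ (i + j + 1) else 0)) *
        ∫ θ in Set.Ioo (-Real.pi) Real.pi,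
          Complex.exp ((((i : ℂ) - j) * Complex.I) * (θ : ℂ))
    from setIntegral_prod_mul (fun r : ℝ => if r < 1 then ((r : ℂ)) ^ (i + j + 1) else 0)
      (fun θ : ℝ => Complex.exp ((((i : ℂ) - j) * Complex.I) * (θ : ℂ))) _ _]
  rw [radial_int]
  by_cases hij : i = j
  · subst hij
    rw [if_pos rfl]
    simp only [sub_self, zero_mul, Complex.exp_zero]
    rw [setIntegral_const, Real.volume_real_Ioo_of_le (by linarith [Real.pi_pos]), Complex.real_smul]
    have h1 : ((i + i + 1 : ℕ) : ℂ) + 1 ≠ 0 := by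
      have : ((i + i + 1 + 1 : ℕ) : ℂ) ≠ 0 := Nat.cast_ne_zero.mpr (by omega)
      push_cast at this ⊢; exact this
    have h2 : (i : ℂ) + 1 ≠ 0 := Nat.cast_add_one_ne_zero i
    push_cast
    push_cast at h1
    field_simp
    have h3 : (2 + (i:ℂ) * 2) ≠ 0 := by
      rw [show (2 + (i:ℂ) * 2) = 2 * ((i:ℂ) + 1) by ring]; exact mul_ne_zero two_ne_zero h2
    linear_combination mul_inv_cancel₀ h3
  · rw [if_neg hij]
    have hm : ((i : ℤ) - j) ≠ 0 := by
      intro h; apply hij; omega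
    have := angular_int ((i : ℤ) - j) hm
    push_cast at this
    rw [this, mul_zero]


lemma moment_eq (n : ℕ) (hn : 1 ≤ n) (P : Polynomial ℂ) (k : ℕ)
    (hvan : ∀ t, n < t → P.coeff t = 0) (N : ℕ) (hN : n ≤ N) :
    moment n P k = ∑ i ∈ Finset.range N,
      (P.derivative * P ^ k).coeff i * (starRingEnd ℂ) (P.coeff (i + 1)) := by
  unfold moment mirrorConj
  rw [coeff_mul, Finset.Nat.sum_antidiagonal_eq_sum_range_succ_mk, show (n - 1).succ = n by omega]
  have h1 : ∀ i ∈ Finset.range n,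
      (P.derivative * P ^ k).coeff i * ((P.map (starRingEnd ℂ)).reflect n).coeff (n - 1 - i)
        = (P.derivative * P ^ k).coeff i * (starRingEnd ℂ) (P.coeff (i + 1)) := by
    intro i hi
    rw [Finset.mem_range] at hi
    rw [Polynomial.coeff_reflect, Polynomial.revAt_le (by omega : n - 1 - i ≤ n),
      Polynomial.coeff_map, show n - (n - 1 - i) = i + 1 by omega]
  rw [Finset.sum_congr rfl h1]
  exact Finset.sum_subset (Finset.range_subset_range.mpr hN) (fun i _ hi => by
    rw [Finset.mem_range, not_lt] at hi
    rw [hvan (i + 1) (by omega), map_zero, mul_zero])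

lemma integrable_mono (c : ℂ) (i j : ℕ) :
    IntegrableOn (fun z : ℂ => c * (z ^ i * (starRingEnd ℂ) z ^ j)) (Metric.ball 0 1) volume := by
  have hc : Continuous fun z : ℂ => c * (z ^ i * (starRingEnd ℂ) z ^ j) :=
    continuous_const.mul ((continuous_pow i).mul (Complex.continuous_conj.pow j))
  exact (hc.continuousOn.integrableOn_compact (isCompact_closedBall 0 1)).mono_set
    Metric.ball_subset_closedBall

/-- for every `k ≥ 0`,
`(1/π) ∫_𝔻 P(z)^k |P'(z)|² dA(z) = μ_k(P)`, where `𝔻` is the open unit disk and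
`dA` is Lebesgue area measure on `ℂ`. -/
theorem integral_eq_moment (n : ℕ) (hn : 1 ≤ n) (a : ℕ → ℂ)
    (P : Polynomial ℂ)
    (hP : P = ∑ s ∈ Finset.Icc 1 n, Polynomial.C (a s) * Polynomial.X ^ s)
    (k : ℕ) :
    (1 / (Real.pi : ℂ)) *
        ∫ z in Metric.ball (0 : ℂ) 1,
          (P.eval z) ^ k * ((‖P.derivative.eval z‖ : ℝ) : ℂ) ^ 2 =
      moment n P k := by
  have hvan : ∀ t, n < t → P.coeff t = 0 := by
    intro t ht
    rw [hP, Polynomial.finset_sum_coeff]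
    refine Finset.sum_eq_zero fun s hs => ?_
    rw [Finset.mem_Icc] at hs
    rw [Polynomial.coeff_C_mul, Polynomial.coeff_X_pow, if_neg (by omega), mul_zero]
  set Q := P.derivative * P ^ k with hQ
  set N := max n (max Q.natDegree P.derivative.natDegree) + 1 with hNdef
  have hnN : n ≤ N := by
    have := le_max_left n (max Q.natDegree P.derivative.natDegree); omega
  have hQN : Q.natDegree < N := by
    have h1 := le_max_right n (max Q.natDegree P.derivative.natDegree)
    have h2 := le_max_left Q.natDegree P.derivative.natDegree
    omega
  have hPN : P.derivative.natDegree < N := by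
    have h1 := le_max_right n (max Q.natDegree P.derivative.natDegree)
    have h2 := le_max_right Q.natDegree P.derivative.natDegree
    omega
  have hpt : ∀ z : ℂ, (P.eval z) ^ k * ((‖P.derivative.eval z‖ : ℝ) : ℂ) ^ 2
      = ∑ i ∈ Finset.range N, ∑ j ∈ Finset.range N,
          (Q.coeff i * (starRingEnd ℂ) (P.derivative.coeff j)) *
            (z ^ i * (starRingEnd ℂ) z ^ j) := by
    intro z
    have habs : ((‖P.derivative.eval z‖ : ℝ) : ℂ) ^ 2
        = P.derivative.eval z * (starRingEnd ℂ) (P.derivative.eval z) := by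
      rw [Complex.mul_conj]
      norm_cast
      exact Complex.sq_norm _
    have hQz : Q.eval z = ∑ i ∈ Finset.range N, Q.coeff i * z ^ i :=
      Polynomial.eval_eq_sum_range' hQN z
    have hPz : (starRingEnd ℂ) (P.derivative.eval z)
        = ∑ j ∈ Finset.range N,
            (starRingEnd ℂ) (P.derivative.coeff j) * (starRingEnd ℂ) z ^ j := by
      rw [Polynomial.eval_eq_sum_range' hPN z, map_sum]
      exact Finset.sum_congr rfl fun j _ => by rw [map_mul, map_pow]
    calc (P.eval z) ^ k * ((‖P.derivative.eval z‖ : ℝ) : ℂ) ^ 2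
        = Q.eval z * (starRingEnd ℂ) (P.derivative.eval z) := by
          rw [habs, hQ, Polynomial.eval_mul, Polynomial.eval_pow]; ring
      _ = _ := by
          rw [hQz, hPz, Finset.sum_mul_sum]
          exact Finset.sum_congr rfl fun i _ => Finset.sum_congr rfl fun j _ => by ring
  have hint : ∫ z in Metric.ball (0 : ℂ) 1,
      (P.eval z) ^ k * ((‖P.derivative.eval z‖ : ℝ) : ℂ) ^ 2
      = ∑ i ∈ Finset.range N, ∑ j ∈ Finset.range N,
          (Q.coeff i * (starRingEnd ℂ) (P.derivative.coeff j)) *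
            ∫ z in Metric.ball (0 : ℂ) 1, z ^ i * (starRingEnd ℂ) z ^ j := by
    simp_rw [hpt]
    rw [integral_finset_sum _ (fun i _ => integrable_finset_sum _
      (fun j _ => integrable_mono _ i j))]
    refine Finset.sum_congr rfl fun i _ => ?_
    rw [integral_finset_sum _ (fun j _ => integrable_mono _ i j)]
    exact Finset.sum_congr rfl fun j _ => integral_const_mul _ _
  rw [hint]
  simp_rw [disk_int, mul_ite, mul_zero, Finset.sum_ite_eq]
  rw [moment_eq n hn P k hvan N hnN]
  rw [Finset.mul_sum]
  refine Finset.sum_congr rfl fun i hi => ?_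
  rw [Finset.mem_range] at hi
  rw [if_pos (Finset.mem_range.mpr hi), Polynomial.coeff_derivative, map_mul]
  have hπ : (Real.pi : ℂ) ≠ 0 := Complex.ofReal_ne_zero.mpr Real.pi_ne_zero
  have hi1 : (i : ℂ) + 1 ≠ 0 := Nat.cast_add_one_ne_zero i
  have hconj : (starRingEnd ℂ) ((i : ℂ) + 1) = (i : ℂ) + 1 := by
    rw [map_add, map_one, Complex.conj_natCast]
  rw [hconj]
  field_simp
  ring
end
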